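/- Let G be a finite undirected graph with disjoint vertex sets S and T, and let Z_1,...,Z_k be the drainage of (G,S,T). Then for every 1 ≤ i ≤ k, the set R(Z_i,S) of vertices reachable from S in G \ Z_i equals the disjoint union R_1 ∪ R_2 ∪ ... ∪ R_i of the layer sets of the drainage construction. -/

import Mathlib

open SimpleGraph

variable {V : Type*}

/-- `X` is an edge `(S,T)`-cut: after deleting the edges of `X`,
no vertex of `S` can reach a vertex of `T`. -/
def EdgeCut (G : SimpleGraph V) (S T : Set V) (X : Finset (Sym2 V)) : Prop :=
  ∀ s ∈ S, ∀ t ∈ T, ¬ (G.deleteEdges ↑X).Reachable s t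

/-- `X` is a minimum edge `(S,T)`-cut. -/
def MinEdgeCut (G : SimpleGraph V) (S T : Set V) (X : Finset (Sym2 V)) : Prop :=
  EdgeCut G S T X ∧ ∀ Y : Finset (Sym2 V), EdgeCut G S T Y → X.card ≤ Y.card

/-- `R(X,S)`: vertices reachable from `S` in `G` deprived of the edges of `X`. -/
def Rside (G : SimpleGraph V) (X : Finset (Sym2 V)) (S : Set V) : Set V :=
  {v | ∃ s ∈ S, (G.deleteEdges ↑X).Reachable s v}

/-- A minimum closest `(S,T)`-cut: a minimum cut `Z` such that no other cut `X'`
satisfies `|X'| ≤ |Z|` and `R(X',S) ⊆ R(Z,S)`. -/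
def MinClosestCut (G : SimpleGraph V) (S T : Set V) (Z : Finset (Sym2 V)) : Prop :=
  MinEdgeCut G S T Z ∧
    ∀ X' : Finset (Sym2 V), EdgeCut G S T X' → X' ≠ Z →
      ¬ (X'.card ≤ Z.card ∧ Rside G X' S ⊆ Rside G Z S)

/-- `G` deprived of the vertex set `U` (kept on the same vertex type). -/
def deprive (G : SimpleGraph V) (U : Set V) : SimpleGraph V where
  Adj u v := G.Adj u v ∧ u ∉ U ∧ v ∉ U
  symm := ⟨fun _ _ ⟨h, hu, hv⟩ => ⟨h.symm, hv, hu⟩⟩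
  loopless := ⟨fun u ⟨h, _, _⟩ => G.loopless.irrefl u h⟩

/-- `V^T(Z)` relative to sources `S`: the endpoints of edges of `Z` that are not
reachable from `S` once `Z` is removed. -/
def nextSources (G : SimpleGraph V) (Z : Finset (Sym2 V)) (S : Set V) : Set V :=
  {v | v ∉ Rside G Z S ∧ ∃ u, s(u, v) ∈ Z}

/-- The drainage `Z 1, ..., Z k` of the instance `(G,S,T)` with minimum cut size `p`:
`Z 1` is the minimum closest `(S,T)`-cut, and `Z (i+1)` is the minimum closest
`(S_{i+1},T)`-cut of size `p` in `G` deprived of `R(Z i, S)`; the construction stops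
at `k`, when no further cut of size `p` exists. -/
def IsDrainage (G : SimpleGraph V) (S T : Set V) (p k : ℕ)
    (Z : ℕ → Finset (Sym2 V)) : Prop :=
  1 ≤ k ∧
  MinClosestCut G S T (Z 1) ∧ (Z 1).card = p ∧
  (∀ i, 1 ≤ i → i < k →
    MinClosestCut (deprive G (Rside G (Z i) S)) (nextSources G (Z i) S) T (Z (i + 1)) ∧
      (Z (i + 1)).card = p) ∧
  (∀ X : Finset (Sym2 V),
    EdgeCut (deprive G (Rside G (Z k) S)) (nextSources G (Z k) S) T X → p < X.card)

/-- The layer `R_j` of the drainage construction: `R_1 = R(Z_1, S)` and, for `j ≥ 2`,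
`R_j` is the set of vertices reachable from `S_j` in `G` deprived of `R(Z_{j-1}, S)`
after deleting `Z_j`. -/
def drainLayer (G : SimpleGraph V) (S : Set V) (Z : ℕ → Finset (Sym2 V)) (j : ℕ) :
    Set V :=
  if j ≤ 1 then Rside G (Z 1) S
  else Rside (deprive G (Rside G (Z (j - 1)) S)) (Z j) (nextSources G (Z (j - 1)) S)

section Helpers

variable {G : SimpleGraph V} {S T : Set V}

/-- Induction along walks: a property closed under adjacency propagates along
reachability. -/
lemma walk_prop_ind {H : SimpleGraph V} {P : V → Prop}
    (hP : ∀ x y, P x → H.Adj x y → P y) :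
    ∀ {a b : V}, H.Walk a b → P a → P b := by
  intro a b w
  induction w with
  | nil => exact id
  | cons h' _ ih => exact fun ha => ih (hP _ _ ha h')

lemma reach_prop_ind {H : SimpleGraph V} {P : V → Prop}
    (hP : ∀ x y, P x → H.Adj x y → P y) {a b : V}
    (h : H.Reachable a b) (ha : P a) : P b := by
  obtain ⟨w⟩ := h
  exact walk_prop_ind hP w ha

lemma mem_Rside_self {X : Finset (Sym2 V)} {s : V} (hs : s ∈ S) :
    s ∈ Rside G X S :=
  ⟨s, hs, Reachable.refl s⟩

lemma Rside_closed {X : Finset (Sym2 V)} {x y : V}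
    (hx : x ∈ Rside G X S) (hadj : G.Adj x y) (hxy : s(x, y) ∉ X) :
    y ∈ Rside G X S := by
  obtain ⟨s, hs, hr⟩ := hx
  refine ⟨s, hs, hr.trans (Adj.reachable ?_)⟩
  rw [deleteEdges_adj]
  exact ⟨hadj, by simpa using hxy⟩

/-- Every element of a minimum edge cut is an actual edge of the graph. -/
lemma minCut_subset_edgeSet {Z : Finset (Sym2 V)}
    (h : MinEdgeCut G S T Z) : ∀ e ∈ Z, e ∈ G.edgeSet := by
  classical
  intro e he
  by_contra hne
  have hgr : G.deleteEdges ↑(Z.erase e) = G.deleteEdges ↑Z := by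
    ext a b
    simp only [deleteEdges_adj, Finset.coe_erase, Set.mem_diff, Finset.mem_coe,
      Set.mem_singleton_iff]
    constructor
    · rintro ⟨hab, hmem⟩
      refine ⟨hab, fun hZ => hmem ⟨hZ, fun heq => hne ?_⟩⟩
      rw [← heq]; exact hab
    · rintro ⟨hab, hmem⟩
      exact ⟨hab, fun ⟨hZ, _⟩ => hmem hZ⟩
  have hcut : EdgeCut G S T (Z.erase e) := by
    intro s hs t ht
    rw [hgr]
    exact h.1 s hs t ht
  have h1 := h.2 _ hcut
  have h2 : (Z.erase e).card < Z.card := Finset.card_erase_lt_of_mem he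
  omega

/-- Every edge of a minimum cut has an endpoint on the source side. -/
lemma minCut_edge_endpoint {Z : Finset (Sym2 V)}
    (h : MinEdgeCut G S T Z) {u v : V} (he : s(u, v) ∈ Z) :
    u ∈ Rside G Z S ∨ v ∈ Rside G Z S := by
  classical
  have hnot : ¬ EdgeCut G S T (Z.erase s(u, v)) := by
    intro hc
    have h1 := h.2 _ hc
    have h2 : (Z.erase s(u, v)).card < Z.card := Finset.card_erase_lt_of_mem he
    omega
  simp only [EdgeCut, not_forall] at hnot
  obtain ⟨s, hs, t, ht, hreach⟩ := hnot
  rw [not_not] at hreach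
  have key : u ∈ Rside G Z S ∨ v ∈ Rside G Z S ∨ t ∈ Rside G Z S := by
    refine reach_prop_ind (P := fun x => u ∈ Rside G Z S ∨ v ∈ Rside G Z S ∨ x ∈ Rside G Z S)
      ?_ hreach (Or.inr (Or.inr (mem_Rside_self hs)))
    rintro x y (hx | hx | hx) hadj
    · exact Or.inl hx
    · exact Or.inr (Or.inl hx)
    · rw [deleteEdges_adj] at hadj
      obtain ⟨hGxy, hnotmem⟩ := hadj
      simp only [Finset.coe_erase, Set.mem_diff, Finset.mem_coe,
        Set.mem_singleton_iff, not_and, not_not] at hnotmem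
      by_cases hZ : s(x, y) ∈ Z
      · have heq := hnotmem hZ
        rw [Sym2.eq_iff] at heq
        rcases heq with ⟨hxu, _⟩ | ⟨hxv, _⟩
        · exact Or.inl (hxu ▸ hx)
        · exact Or.inr (Or.inl (hxv ▸ hx))
      · exact Or.inr (Or.inr (Rside_closed hx hGxy hZ))
  rcases key with hk | hk | hk
  · exact Or.inl hk
  · exact Or.inr hk
  · obtain ⟨s₀, hs₀, hr₀⟩ := hk
    exact absurd hr₀ (h.1 s₀ hs₀ t ht)

lemma deprive_adj {U : Set V} {x y : V} (h : (deprive G U).Adj x y) :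
    G.Adj x y ∧ x ∉ U ∧ y ∉ U := h

/-- Vertices reachable in the deprived graph from sources outside `U` stay outside `U`. -/
lemma Rside_deprive_notmem {U : Set V} {Z : Finset (Sym2 V)} {S' : Set V}
    (hS' : ∀ s ∈ S', s ∉ U) : ∀ v ∈ Rside (deprive G U) Z S', v ∉ U := by
  rintro v ⟨s, hs, hr⟩
  refine reach_prop_ind (P := fun x => x ∉ U) ?_ hr (hS' s hs)
  intro x y _ hadj
  rw [deleteEdges_adj] at hadj
  exact hadj.1.2.2

end Helpers

/-- For every `1 ≤ i ≤ k`, `R(Z_i, S)` is the disjoint union of the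
layers `R_1, ..., R_i` of the drainage construction. -/
theorem drainage_reachable_eq_union_layers
    [Fintype V] (G : SimpleGraph V) (S T : Set V)
    (hST : Disjoint S T) (hS : S.Nonempty) (hT : T.Nonempty)
    (p k : ℕ) (Z : ℕ → Finset (Sym2 V)) (hZ : IsDrainage G S T p k Z) :
    (∀ i, 1 ≤ i → i ≤ k →
      Rside G (Z i) S = ⋃ j ∈ Finset.Icc 1 i, drainLayer G S Z j) ∧
    (∀ j j', 1 ≤ j → j < j' → j' ≤ k → Disjoint (drainLayer G S Z j) (drainLayer G S Z j')) := by
  obtain ⟨hk, hZ1, hZ1card, hZstep, hZstop⟩ := hZ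
  -- `endpoint` fact packaged: for 1 ≤ i ≤ k, Z i is a min cut of a subgraph of G
  -- whose source side is contained in Rside G (Z i) S, provided the union formula
  -- holds at stage i.
  have key : ∀ i, 1 ≤ i → i ≤ k →
      Rside G (Z i) S = ⋃ j ∈ Finset.Icc 1 i, drainLayer G S Z j := by
    intro i h1
    induction i, h1 using Nat.le_induction with
    | base =>
      intro _
      have : Finset.Icc 1 1 = {1} := by decide
      simp [this, drainLayer]
    | succ i hi ih =>
      intro hik
      have hiklt : i < k := hik
      have hCi := ih (le_of_lt hiklt)
      set A : Set V := Rside G (Z i) S with hA_def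
      obtain ⟨hmin, _⟩ := hZstep i hi hiklt
      set G' : SimpleGraph V := deprive G A with hG'_def
      set S' : Set V := nextSources G (Z i) S with hS'_def
      set Z' : Finset (Sym2 V) := Z (i + 1) with hZ'_def
      -- edges of Z' are edges of G', hence avoid A
      have f4 : ∀ x y : V, s(x, y) ∈ Z' → G.Adj x y ∧ x ∉ A ∧ y ∉ A := by
        intro x y hxy
        have := minCut_subset_edgeSet hmin.1 _ hxy
        rw [SimpleGraph.mem_edgeSet] at this
        exact deprive_adj this
      -- every edge of Z i is a G-edge with an endpoint in A
      have f2 : ∀ u v : V, s(u, v) ∈ Z i → G.Adj u v ∧ (u ∈ A ∨ v ∈ A) := by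
        rcases Nat.lt_or_ge i 2 with h2 | h2
        · have hi1 : i = 1 := by omega
          subst hi1
          intro u v huv
          have hedge := minCut_subset_edgeSet hZ1.1 _ huv
          rw [SimpleGraph.mem_edgeSet] at hedge
          exact ⟨hedge, minCut_edge_endpoint hZ1.1 huv⟩
        · obtain ⟨j, rfl⟩ : ∃ j, i = j + 1 := ⟨i - 1, by omega⟩
          have hj1 : 1 ≤ j := by omega
          have hjk : j < k := by omega
          obtain ⟨hminj, _⟩ := hZstep j hj1 hjk
          intro u v huv
          have hedge := minCut_subset_edgeSet hminj.1 _ huv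
          rw [SimpleGraph.mem_edgeSet] at hedge
          obtain ⟨hGuv, _, _⟩ := deprive_adj hedge
          refine ⟨hGuv, ?_⟩
          have hend := minCut_edge_endpoint hminj.1 huv
          have hlayer : Rside (deprive G (Rside G (Z j) S)) (Z (j + 1))
              (nextSources G (Z j) S) = drainLayer G S Z (j + 1) := by
            rw [drainLayer]
            have : ¬ (j + 1 ≤ 1) := by omega
            rw [if_neg this]
            simp
          have hsub : drainLayer G S Z (j + 1) ⊆ A := by
            rw [hCi]
            exact Set.subset_biUnion_of_mem (Finset.mem_Icc.mpr (by omega))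
          rw [hlayer] at hend
          exact hend.imp (fun h => hsub h) (fun h => hsub h)
      -- A ⊆ Rside G Z' S
      have hA : A ⊆ Rside G Z' S := by
        rintro v ⟨s, hs, hr⟩
        have := reach_prop_ind (P := fun x => x ∈ A ∧ x ∈ Rside G Z' S) ?_ hr
          ⟨mem_Rside_self hs, mem_Rside_self hs⟩
        · exact this.2
        · rintro x y ⟨hxA, hxR⟩ hadj
          rw [deleteEdges_adj] at hadj
          obtain ⟨hGxy, hxyZ⟩ := hadj
          have hxyZ' : s(x, y) ∉ Z' := fun hmem => (f4 x y hmem).2.1 hxA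
          exact ⟨Rside_closed hxA hGxy (by simpa using hxyZ),
            Rside_closed hxR hGxy hxyZ'⟩
      -- S' ⊆ Rside G Z' S
      have hS'R : S' ⊆ Rside G Z' S := by
        rintro s' ⟨hs'A, u, hu⟩
        obtain ⟨hGus', hor⟩ := f2 u s' hu
        have huA : u ∈ A := hor.resolve_right hs'A
        have hedge' : s(u, s') ∉ Z' := fun hmem => (f4 u s' hmem).2.1 huA
        exact Rside_closed (hA huA) hGus' hedge'
      -- the new layer
      have hR : drainLayer G S Z (i + 1) = Rside G' Z' S' := by
        rw [drainLayer]
        have : ¬ (i + 1 ≤ 1) := by omega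
        rw [if_neg this]
        simp [hG'_def, hS'_def, hZ'_def, hA_def]
      -- vertices of the new layer avoid A
      have hDisjA : ∀ v ∈ Rside G' Z' S', v ∉ A := by
        rw [hG'_def]
        exact Rside_deprive_notmem (fun s hs => hs.1)
      -- Rside G' Z' S' ⊆ Rside G Z' S
      have hRsub : Rside G' Z' S' ⊆ Rside G Z' S := by
        rintro v ⟨s', hs', hr⟩
        refine reach_prop_ind (P := fun x => x ∈ Rside G Z' S) ?_ hr (hS'R hs')
        intro x y hx hadj
        rw [deleteEdges_adj] at hadj
        obtain ⟨hadj', hxyZ'⟩ := hadj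
        exact Rside_closed hx (deprive_adj hadj').1 (by simpa using hxyZ')
      -- Rside G Z' S ⊆ A ∪ Rside G' Z' S'
      have hsubset : Rside G Z' S ⊆ A ∪ Rside G' Z' S' := by
        rintro v ⟨s, hs, hr⟩
        refine reach_prop_ind (P := fun x => x ∈ A ∪ Rside G' Z' S') ?_ hr
          (Or.inl (mem_Rside_self hs))
        rintro x y (hx | hx) hadj <;> rw [deleteEdges_adj] at hadj <;>
          obtain ⟨hGxy, hxyZ'⟩ := hadj <;>
          rw [Finset.mem_coe] at hxyZ'
        · by_cases hxyZi : s(x, y) ∈ Z i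
          · by_cases hyA : y ∈ A
            · exact Or.inl hyA
            · refine Or.inr (mem_Rside_self ?_)
              exact ⟨hyA, x, hxyZi⟩
          · exact Or.inl (Rside_closed hx hGxy hxyZi)
        · by_cases hyA : y ∈ A
          · exact Or.inl hyA
          · have hxA : x ∉ A := hDisjA x hx
            refine Or.inr ?_
            obtain ⟨s', hs', hr'⟩ := hx
            refine ⟨s', hs', hr'.trans (Adj.reachable ?_)⟩
            rw [deleteEdges_adj]
            exact ⟨⟨hGxy, hxA, hyA⟩, by simpa using hxyZ'⟩
      -- assemble
      have hIcc : Finset.Icc 1 (i + 1) = insert (i + 1) (Finset.Icc 1 i) := by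
        ext x
        simp only [Finset.mem_Icc, Finset.mem_insert]
        omega
      rw [hIcc]
      rw [Finset.set_biUnion_insert, hR, ← hCi]
      apply Set.Subset.antisymm
      · intro v hv
        rcases hsubset hv with h | h
        · exact Or.inr h
        · exact Or.inl h
      · rintro v (hv | hv)
        · exact hRsub hv
        · exact hA hv
  refine ⟨key, ?_⟩
  -- disjointness
  intro j j' hj hjj' hj'k
  have hj'2 : 2 ≤ j' := by omega
  have hj'1 : 1 ≤ j' - 1 := by omega
  have hj'1k : j' - 1 ≤ k := by omega
  set B : Set V := Rside G (Z (j' - 1)) S with hB_def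
  have hlayerj : drainLayer G S Z j ⊆ B := by
    rw [hB_def, key (j' - 1) hj'1 hj'1k]
    exact Set.subset_biUnion_of_mem (Finset.mem_Icc.mpr (by omega))
  have hlayerj' : ∀ v ∈ drainLayer G S Z j', v ∉ B := by
    intro v hv
    rw [drainLayer] at hv
    have : ¬ (j' ≤ 1) := by omega
    rw [if_neg this] at hv
    exact Rside_deprive_notmem (fun s hs => hs.1) v hv
  rw [Set.disjoint_left]
  intro v hvj hvj'
  exact hlayerj' v hvj' (hlayerj hvj)
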